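/- arXiv:2604.20394 — 2 statements merged into one kernel-verified Lean document; each statement's English description precedes it below -/
import Mathlib

section
/- In the regression lower-bound construction, for every split j ∈ {0,1,...,N} with j ∉ {2i−1, 2i}, the mean squared loss satisfies L(j) ≥ 50/201. -/
open Finset

/-- SSE of the data points of a multiset dataset whose feature value lies in range `R`. -/
noncomputable def SSE (data : Multiset (ℕ × ℝ)) (R : Finset ℕ) : ℝ :=
  let d := data.filter fun p => p.1 ∈ R
  if d ≠ 0 then
    (d.map fun p => p.2 ^ 2).sum - ((d.map fun p => p.2).sum) ^ 2 / (Multiset.card d : ℝ)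
  else 0

/-- Mean squared loss of split `j ∈ {0,…,N}`. -/
noncomputable def L (N : ℕ) (data : Multiset (ℕ × ℝ)) (j : ℕ) : ℝ :=
  (1 / (Multiset.card data : ℝ)) *
    (SSE data (Finset.Icc 1 j) + SSE data (Finset.Icc (j + 1) N))

/-- The regression lower-bound dataset: for each `k ∈ {1,…,n}`, `B = n` copies of `(2k, z_k)`;
`T = 100n²` copies of `(2i−1, 0)`; and `T` copies of `(2i+1, 1)`. -/
def regData (n i : ℕ) (z : ℕ → ℝ) : Multiset (ℕ × ℝ) :=
  (∑ k ∈ Finset.Icc 1 n, Multiset.replicate n (2 * k, z k))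
  + Multiset.replicate (100 * n ^ 2) (2 * i - 1, (0 : ℝ))
  + Multiset.replicate (100 * n ^ 2) (2 * i + 1, (1 : ℝ))

lemma sum_snd_nonneg (d : Multiset (ℕ × ℝ)) (h : ∀ p ∈ d, p.2 = 0 ∨ p.2 = 1) :
    0 ≤ (d.map Prod.snd).sum := by
  apply Multiset.sum_nonneg
  intro y hy
  obtain ⟨p, hp, rfl⟩ := Multiset.mem_map.1 hy
  rcases h p hp with h' | h' <;> simp [h']

lemma sum_snd_le_card (d : Multiset (ℕ × ℝ)) (h : ∀ p ∈ d, p.2 = 0 ∨ p.2 = 1) :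
    (d.map Prod.snd).sum ≤ (Multiset.card d : ℝ) := by
  calc (d.map Prod.snd).sum ≤ (d.map fun _ => (1:ℝ)).sum := by
        apply Multiset.sum_map_le_sum_map
        intro p hp; rcases h p hp with h' | h' <;> simp [h']
    _ = (Multiset.card d : ℝ) := by
        simp [Multiset.map_const', Multiset.sum_replicate]

lemma sq_snd_eq (d : Multiset (ℕ × ℝ)) (h : ∀ p ∈ d, p.2 = 0 ∨ p.2 = 1) :
    (d.map fun p => p.2 ^ 2).sum = (d.map Prod.snd).sum := by
  congr 1
  apply Multiset.map_congr rfl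
  intro p hp; rcases h p hp with h' | h' <;> simp [h']

lemma SSE_nonneg01 (data : Multiset (ℕ × ℝ)) (R : Finset ℕ)
    (h01 : ∀ p ∈ data, p.2 = 0 ∨ p.2 = 1) : 0 ≤ SSE data R := by
  unfold SSE
  set d := data.filter fun p => p.1 ∈ R with hd
  dsimp only
  split_ifs with h
  · have h01d : ∀ p ∈ d, p.2 = 0 ∨ p.2 = 1 :=
      fun p hp => h01 p (Multiset.mem_of_mem_filter hp)
    have hc : 0 < (Multiset.card d : ℝ) := by
      have : d ≠ 0 := h
      have : 0 < Multiset.card d := Multiset.card_pos.2 this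
      exact_mod_cast this
    have hq := sq_snd_eq d h01d
    have hs0 := sum_snd_nonneg d h01d
    have hsc := sum_snd_le_card d h01d
    rw [show (d.map fun p => p.2) = d.map Prod.snd from rfl, hq]
    rw [sub_nonneg, div_le_iff₀ hc]
    nlinarith [hs0, hsc]
  · exact le_refl 0

lemma SSE_lower01 (data : Multiset (ℕ × ℝ)) (R : Finset ℕ) (T : ℕ) (hT : 0 < T)
    (h01 : ∀ p ∈ data, p.2 = 0 ∨ p.2 = 1) (x y : ℕ) (hx : x ∈ R) (hy : y ∈ R)
    (hA : Multiset.replicate T (x, (0:ℝ)) ≤ data)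
    (hB : Multiset.replicate T (y, (1:ℝ)) ≤ data) :
    (T : ℝ) / 2 ≤ SSE data R := by
  unfold SSE
  set d := data.filter fun p => p.1 ∈ R with hd
  have h01d : ∀ p ∈ d, p.2 = 0 ∨ p.2 = 1 :=
    fun p hp => h01 p (Multiset.mem_of_mem_filter hp)
  have hAd : Multiset.replicate T (x, (0:ℝ)) ≤ d :=
    Multiset.le_filter.2 ⟨hA, fun a ha => by rw [Multiset.eq_of_mem_replicate ha]; exact hx⟩
  have hBd : Multiset.replicate T (y, (1:ℝ)) ≤ d :=
    Multiset.le_filter.2 ⟨hB, fun a ha => by rw [Multiset.eq_of_mem_replicate ha]; exact hy⟩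
  obtain ⟨e0, he0⟩ := Multiset.le_iff_exists_add.1 hAd
  obtain ⟨e1, he1⟩ := Multiset.le_iff_exists_add.1 hBd
  set s := (d.map Prod.snd).sum with hs
  set c := (Multiset.card d : ℝ) with hc
  have hdne : d ≠ 0 := by
    intro h0
    rw [h0] at he0
    have := congrArg Multiset.card he0
    simp [Multiset.card_replicate] at this
    omega
  have hcpos : 0 < c := by
    have : 0 < Multiset.card d := Multiset.card_pos.2 hdne
    rw [hc]; exact_mod_cast this
  have hTs : (T : ℝ) ≤ s := by
    have h01e : ∀ p ∈ e1, p.2 = 0 ∨ p.2 = 1 := by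
      intro p hp; apply h01d; rw [he1]; exact Multiset.mem_add.2 (Or.inr hp)
    have : s = (T : ℝ) * 1 + (e1.map Prod.snd).sum := by
      rw [hs, he1, Multiset.map_add, Multiset.sum_add, Multiset.map_replicate,
        Multiset.sum_replicate]
      simp
    rw [this]
    have := sum_snd_nonneg e1 h01e
    linarith
  have hsT : s + (T : ℝ) ≤ c := by
    have h01e : ∀ p ∈ e0, p.2 = 0 ∨ p.2 = 1 := by
      intro p hp; apply h01d; rw [he0]; exact Multiset.mem_add.2 (Or.inr hp)
    have hs' : s = (e0.map Prod.snd).sum := by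
      rw [hs, he0, Multiset.map_add, Multiset.sum_add, Multiset.map_replicate,
        Multiset.sum_replicate]
      simp
    have hc' : c = (T : ℝ) + (Multiset.card e0 : ℝ) := by
      rw [hc, he0]
      simp [Multiset.card_add, Multiset.card_replicate]
    have := sum_snd_le_card e0 h01e
    rw [hs', hc']
    linarith
  rw [if_pos hdne, sq_snd_eq d h01d]
  rw [show (d.map fun p => p.2) = d.map Prod.snd from rfl]
  rw [← hs, ← hc]
  have : s - s ^ 2 / c = s * (c - s) / c := by field_simp
  rw [this, div_le_div_iff₀ (by norm_num : (0:ℝ) < 2) hcpos]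
  nlinarith

lemma regData_labels (n i : ℕ) (z : ℕ → ℝ) (hz : ∀ k, z k = 0 ∨ z k = 1) :
    ∀ p ∈ regData n i z, p.2 = 0 ∨ p.2 = 1 := by
  intro p hp
  simp only [regData, Multiset.mem_add, Multiset.mem_sum, Multiset.mem_replicate] at hp
  rcases hp with (⟨k, hk, _, rfl⟩ | ⟨_, rfl⟩) | ⟨_, rfl⟩
  · exact hz k
  · exact Or.inl rfl
  · exact Or.inr rfl

lemma card_msum (n : ℕ) (f : ℕ → Multiset (ℕ × ℝ)) :
    Multiset.card (∑ k ∈ Finset.Icc 1 n, f k) = ∑ k ∈ Finset.Icc 1 n, Multiset.card (f k) := by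
  induction (Finset.Icc 1 n) using Finset.cons_induction with
  | empty => simp
  | cons a s ha ih => simp [Finset.sum_cons, ih]

lemma regData_card (n i : ℕ) (z : ℕ → ℝ) :
    Multiset.card (regData n i z) = 201 * n ^ 2 := by
  simp only [regData, Multiset.card_add, card_msum, Multiset.card_replicate,
    Finset.sum_const, smul_eq_mul, Nat.card_Icc]
  have : n + 1 - 1 = n := by omega
  rw [this]
  ring

lemma rep0_le (n i : ℕ) (z : ℕ → ℝ) :
    Multiset.replicate (100 * n ^ 2) (2 * i - 1, (0:ℝ)) ≤ regData n i z := by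
  unfold regData
  exact le_trans (Multiset.le_add_left _ _) (Multiset.le_add_right _ _)

lemma rep1_le (n i : ℕ) (z : ℕ → ℝ) :
    Multiset.replicate (100 * n ^ 2) (2 * i + 1, (1:ℝ)) ≤ regData n i z := by
  unfold regData
  exact Multiset.le_add_left _ _

/-- In the regression lower-bound construction, every split `j ∉ {2i−1, 2i}` has mean
squared loss at least `50/201`. -/
theorem reg_far_splits_loss (n : ℕ) (hn : 1 ≤ n) (i : ℕ) (hi : i ∈ Finset.Icc 1 n)
    (z : ℕ → ℝ) (hz : ∀ k, z k = 0 ∨ z k = 1)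
    (j : ℕ) (hj : j ≤ 2 * n + 1) (hj1 : j ≠ 2 * i - 1) (hj2 : j ≠ 2 * i) :
    (50 : ℝ) / 201 ≤ L (2 * n + 1) (regData n i z) j := by
  obtain ⟨hi1, hi2⟩ := Finset.mem_Icc.1 hi
  have h01 := regData_labels n i z hz
  have hTpos : 0 < 100 * n ^ 2 := by positivity
  have hn2 : (0:ℝ) < (n:ℝ) ^ 2 := by positivity
  have hcard : (Multiset.card (regData n i z) : ℝ) = 201 * (n:ℝ) ^ 2 := by
    rw [regData_card]; push_cast; ring
  have hThalf : ((100 * n ^ 2 : ℕ) : ℝ) / 2 = 50 * (n:ℝ) ^ 2 := by push_cast; ring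
  have hfinal : ∀ S : ℝ, 50 * (n:ℝ) ^ 2 ≤ S →
      (50 : ℝ) / 201 ≤ 1 / (Multiset.card (regData n i z) : ℝ) * S := by
    intro S hS
    rw [hcard, one_div, inv_mul_eq_div, le_div_iff₀ (by positivity)]
    nlinarith
  have hcase : j + 1 ≤ 2 * i - 1 ∨ 2 * i + 1 ≤ j := by omega
  unfold L
  rcases hcase with hc | hc
  · -- both special points on the right
    have hx : 2 * i - 1 ∈ Finset.Icc (j + 1) (2 * n + 1) := by
      rw [Finset.mem_Icc]; omega
    have hy : 2 * i + 1 ∈ Finset.Icc (j + 1) (2 * n + 1) := by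
      rw [Finset.mem_Icc]; omega
    have hR := SSE_lower01 (regData n i z) (Finset.Icc (j + 1) (2 * n + 1)) _ hTpos h01
      _ _ hx hy (rep0_le n i z) (rep1_le n i z)
    have hL := SSE_nonneg01 (regData n i z) (Finset.Icc 1 j) h01
    exact hfinal _ (by rw [hThalf] at hR; linarith)
  · -- both special points on the left
    have hx : 2 * i - 1 ∈ Finset.Icc 1 j := by rw [Finset.mem_Icc]; omega
    have hy : 2 * i + 1 ∈ Finset.Icc 1 j := by rw [Finset.mem_Icc]; omega
    have hR := SSE_lower01 (regData n i z) (Finset.Icc 1 j) _ hTpos h01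
      _ _ hx hy (rep0_le n i z) (rep1_le n i z)
    have hL := SSE_nonneg01 (regData n i z) (Finset.Icc (j + 1) (2 * n + 1)) h01
    exact hfinal _ (by rw [hThalf] at hR; linarith)
end

section
/- In the regression lower-bound construction, for each split j ∈ {2i−1, 2i}, the mean squared loss satisfies L(j) ≤ 1/201. Consequently, min_{0 ≤ j ≤ N} L(j) = min{L(2i−1), L(2i)}. -/
open Finset

/- ### Auxiliary lemmas -/

lemma my_filter_replicate {α} (p : α → Prop) [DecidablePred p] (k : ℕ) (a : α) :
    (Multiset.replicate k a).filter p = if p a then Multiset.replicate k a else 0 := by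
  split
  · exact Multiset.filter_eq_self.mpr fun b hb => by rwa [Multiset.eq_of_mem_replicate hb]
  · exact Multiset.filter_eq_nil.mpr fun b hb h => by
      rw [Multiset.eq_of_mem_replicate hb] at h; exact absurd h ‹¬ p a›

lemma my_filter_finsetSum {α β} (s : Finset β) (f : β → Multiset α) (p : α → Prop)
    [DecidablePred p] : (∑ b ∈ s, f b).filter p = ∑ b ∈ s, (f b).filter p := by
  classical
  induction s using Finset.induction with
  | empty => simp
  | insert _ _ h ih => simp [Finset.sum_insert h, Multiset.filter_add, ih]

lemma my_card_finsetSum {α β} (s : Finset β) (f : β → Multiset α) :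
    Multiset.card (∑ b ∈ s, f b) = ∑ b ∈ s, Multiset.card (f b) := by
  classical
  induction s using Finset.induction with
  | empty => simp
  | insert _ _ h ih => simp [Finset.sum_insert h, ih]

lemma my_mapsum_finsetSum {α β γ} [AddCommMonoid γ] (s : Finset β) (f : β → Multiset α)
    (g : α → γ) : ((∑ b ∈ s, f b).map g).sum = ∑ b ∈ s, ((f b).map g).sum := by
  classical
  induction s using Finset.induction with
  | empty => simp
  | insert _ _ h ih => simp [Finset.sum_insert h, ih]

/- ### Generic SSE facts for binary-labelled data -/

section SSEfacts

variable (data : Multiset (ℕ × ℝ)) (R : Finset ℕ)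

lemma q_eq_s (h : ∀ p ∈ data, p.2 = 0 ∨ p.2 = 1) :
    (((data.filter fun p => p.1 ∈ R)).map fun p => p.2 ^ 2).sum
      = (((data.filter fun p => p.1 ∈ R)).map fun p => p.2).sum := by
  congr 1
  refine Multiset.map_congr rfl fun p hp => ?_
  rcases h p (Multiset.mem_of_mem_filter hp) with h' | h' <;> rw [h'] <;> ring

lemma s_nonneg (h : ∀ p ∈ data, p.2 = 0 ∨ p.2 = 1) :
    0 ≤ (((data.filter fun p => p.1 ∈ R)).map fun p => p.2).sum := by
  refine Multiset.sum_nonneg fun x hx => ?_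
  obtain ⟨p, hp, rfl⟩ := Multiset.mem_map.mp hx
  rcases h p (Multiset.mem_of_mem_filter hp) with h' | h' <;> rw [h'] <;> norm_num

lemma s_le_card (h : ∀ p ∈ data, p.2 = 0 ∨ p.2 = 1) :
    (((data.filter fun p => p.1 ∈ R)).map fun p => p.2).sum
      ≤ (Multiset.card (data.filter fun p => p.1 ∈ R) : ℝ) := by
  have := Multiset.sum_le_card_nsmul ((data.filter fun p => p.1 ∈ R).map fun p => p.2) 1
    (fun x hx => by
      obtain ⟨p, hp, rfl⟩ := Multiset.mem_map.mp hx
      rcases h p (Multiset.mem_of_mem_filter hp) with h' | h' <;> rw [h'] <;> norm_num)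
  simpa using this

lemma SSE_eq (h : ∀ p ∈ data, p.2 = 0 ∨ p.2 = 1) :
    SSE data R = (if (data.filter fun p => p.1 ∈ R) ≠ 0 then
      (((data.filter fun p => p.1 ∈ R)).map fun p => p.2).sum
        - (((data.filter fun p => p.1 ∈ R)).map fun p => p.2).sum ^ 2
          / (Multiset.card (data.filter fun p => p.1 ∈ R) : ℝ) else 0) := by
  rw [SSE, q_eq_s data R h]

lemma SSE_le_s (h : ∀ p ∈ data, p.2 = 0 ∨ p.2 = 1) :
    SSE data R ≤ (((data.filter fun p => p.1 ∈ R)).map fun p => p.2).sum := by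
  rw [SSE_eq data R h]
  split_ifs with hd
  · have : 0 ≤ (((data.filter fun p => p.1 ∈ R)).map fun p => p.2).sum ^ 2
        / (Multiset.card (data.filter fun p => p.1 ∈ R) : ℝ) :=
      div_nonneg (sq_nonneg _) (by positivity)
    linarith
  · exact s_nonneg data R h

lemma SSE_le_c_sub_s (h : ∀ p ∈ data, p.2 = 0 ∨ p.2 = 1) :
    SSE data R ≤ (Multiset.card (data.filter fun p => p.1 ∈ R) : ℝ)
      - (((data.filter fun p => p.1 ∈ R)).map fun p => p.2).sum := by
  rw [SSE_eq data R h]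
  set s := (((data.filter fun p => p.1 ∈ R)).map fun p => p.2).sum with hs
  set c := (Multiset.card (data.filter fun p => p.1 ∈ R) : ℝ) with hc
  split_ifs with hd
  · have hcpos : (0 : ℝ) < c := by
      rw [hc]
      exact_mod_cast Multiset.card_pos.mpr hd
    have key : 2 * s - c ≤ s ^ 2 / c := by
      rw [le_div_iff₀ hcpos]; nlinarith [sq_nonneg (s - c)]
    linarith
  · simp only [ne_eq, not_not] at hd
    simp [hs, hc, hd]

lemma SSE_nonneg (h : ∀ p ∈ data, p.2 = 0 ∨ p.2 = 1) : 0 ≤ SSE data R := by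
  rw [SSE_eq data R h]
  set s := (((data.filter fun p => p.1 ∈ R)).map fun p => p.2).sum with hs
  set c := (Multiset.card (data.filter fun p => p.1 ∈ R) : ℝ) with hc
  split_ifs with hd
  · have hcpos : (0 : ℝ) < c := by
      rw [hc]; exact_mod_cast Multiset.card_pos.mpr hd
    have h0 : 0 ≤ s := s_nonneg data R h
    have h1 : s ≤ c := s_le_card data R h
    have key : s ^ 2 / c ≤ s := by
      rw [div_le_iff₀ hcpos]; nlinarith
    linarith
  · exact le_refl 0

lemma SSE_ge (h : ∀ p ∈ data, p.2 = 0 ∨ p.2 = 1) (t m : ℝ) (ht : 0 < t)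
    (hs : t ≤ (((data.filter fun p => p.1 ∈ R)).map fun p => p.2).sum)
    (hcs : t ≤ (Multiset.card (data.filter fun p => p.1 ∈ R) : ℝ)
      - (((data.filter fun p => p.1 ∈ R)).map fun p => p.2).sum)
    (hm : (Multiset.card (data.filter fun p => p.1 ∈ R) : ℝ) ≤ m) :
    t ^ 2 / m ≤ SSE data R := by
  rw [SSE_eq data R h]
  set s := (((data.filter fun p => p.1 ∈ R)).map fun p => p.2).sum with hsdef
  set c := (Multiset.card (data.filter fun p => p.1 ∈ R) : ℝ) with hcdef
  have hcpos : (0 : ℝ) < c := by nlinarith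
  have hd : (data.filter fun p => p.1 ∈ R) ≠ 0 := by
    intro h0
    rw [hcdef, h0] at hcpos
    simp at hcpos
  rw [if_pos hd]
  have hmpos : (0 : ℝ) < m := lt_of_lt_of_le hcpos hm
  have hrw : s - s ^ 2 / c = s * (c - s) / c := by field_simp
  rw [hrw]
  have h1 : t ^ 2 ≤ s * (c - s) := by nlinarith
  calc t ^ 2 / m ≤ s * (c - s) / m := by gcongr
    _ ≤ s * (c - s) / c := by
        apply div_le_div_of_nonneg_left _ hcpos hm
        nlinarith
  -- done

end SSEfacts

/- ### Facts about the regression dataset -/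

section RegData

variable (n i : ℕ) (z : ℕ → ℝ)

lemma regData_binary (hz : ∀ k, z k = 0 ∨ z k = 1) :
    ∀ p ∈ regData n i z, p.2 = 0 ∨ p.2 = 1 := by
  intro p hp
  simp only [regData, Multiset.mem_add, Multiset.mem_sum, Multiset.mem_replicate] at hp
  rcases hp with (⟨k, _, _, rfl⟩ | ⟨_, rfl⟩) | ⟨_, rfl⟩
  · exact hz k
  · left; rfl
  · right; rfl

lemma regData_filter (R : Finset ℕ) :
    (regData n i z).filter (fun p => p.1 ∈ R) =
      (∑ k ∈ Finset.Icc 1 n,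
        if 2 * k ∈ R then Multiset.replicate n (2 * k, z k) else 0)
      + (if 2 * i - 1 ∈ R then Multiset.replicate (100 * n ^ 2) (2 * i - 1, (0 : ℝ)) else 0)
      + (if 2 * i + 1 ∈ R then Multiset.replicate (100 * n ^ 2) (2 * i + 1, (1 : ℝ)) else 0) := by
  rw [regData, Multiset.filter_add, Multiset.filter_add, my_filter_finsetSum]
  simp only [my_filter_replicate]

lemma regData_card_s14 (R : Finset ℕ) :
    (Multiset.card ((regData n i z).filter fun p => p.1 ∈ R) : ℝ)
      = n * (((Finset.Icc 1 n).filter fun k => 2 * k ∈ R).card : ℝ)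
        + (if 2 * i - 1 ∈ R then (100 : ℝ) * n ^ 2 else 0)
        + (if 2 * i + 1 ∈ R then (100 : ℝ) * n ^ 2 else 0) := by
  rw [regData_filter]
  simp only [Multiset.card_add, my_card_finsetSum, apply_ite Multiset.card,
    Multiset.card_replicate, Multiset.card_zero]
  push_cast [apply_ite (fun m : ℕ => (m : ℝ))]
  rw [← Finset.sum_filter, Finset.sum_const, nsmul_eq_mul, mul_comm]

lemma regData_s (R : Finset ℕ) :
    ((((regData n i z).filter fun p => p.1 ∈ R)).map fun p => p.2).sum
      = n * (∑ k ∈ (Finset.Icc 1 n).filter fun k => 2 * k ∈ R, z k)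
        + (if 2 * i + 1 ∈ R then (100 : ℝ) * n ^ 2 else 0) := by
  rw [regData_filter]
  simp only [Multiset.map_add, Multiset.sum_add, my_mapsum_finsetSum,
    apply_ite (Multiset.map fun p : ℕ × ℝ => p.2), apply_ite Multiset.sum,
    Multiset.map_replicate, Multiset.sum_replicate, Multiset.map_zero, Multiset.sum_zero,
    smul_eq_mul, mul_zero, mul_one]
  simp only [nsmul_eq_mul, mul_zero, mul_one, smul_zero]
  rw [← Finset.sum_filter, Finset.mul_sum]
  split_ifs <;> push_cast <;> ring

end RegData

/- ### Main bound lemmas -/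

lemma regData_total_card (n i : ℕ) (z : ℕ → ℝ) :
    (Multiset.card (regData n i z) : ℝ) = 201 * (n : ℝ) ^ 2 := by
  rw [regData]
  simp only [Multiset.card_add, my_card_finsetSum, Multiset.card_replicate,
    Finset.sum_const, Nat.card_Icc, smul_eq_mul]
  push_cast [Nat.add_sub_cancel]
  ring

lemma L_near_le (n i : ℕ) (z : ℕ → ℝ) (hn : 1 ≤ n) (hi1 : 1 ≤ i) (hi2 : i ≤ n)
    (hz : ∀ k, z k = 0 ∨ z k = 1) (j : ℕ)
    (hL : 2 * i - 1 ∈ Finset.Icc 1 j) (hR : 2 * i + 1 ∈ Finset.Icc (j + 1) (2 * n + 1)) :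
    L (2 * n + 1) (regData n i z) j ≤ 1 / 201 := by
  have hbin := regData_binary n i z hz
  set RL := Finset.Icc 1 j with hRL
  set RR := Finset.Icc (j + 1) (2 * n + 1) with hRR
  set A := (Finset.Icc 1 n).filter (fun k => 2 * k ∈ RL) with hA
  set B := (Finset.Icc 1 n).filter (fun k => 2 * k ∈ RR) with hB
  have hL' : 1 ≤ 2 * i - 1 ∧ 2 * i - 1 ≤ j := by rw [hRL, Finset.mem_Icc] at hL; exact hL
  have hR' : j + 1 ≤ 2 * i + 1 ∧ 2 * i + 1 ≤ 2 * n + 1 := by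
    rw [hRR, Finset.mem_Icc] at hR; exact hR
  have hnotL : 2 * i + 1 ∉ RL := by
    rw [hRL, Finset.mem_Icc]; omega
  have hnotR : 2 * i - 1 ∉ RR := by
    rw [hRR, Finset.mem_Icc]; omega
  -- bound on left SSE
  have hSL : SSE (regData n i z) RL ≤ (n : ℝ) * ∑ k ∈ A, z k := by
    have h1 := SSE_le_s (regData n i z) RL hbin
    rwa [regData_s, if_neg hnotL, add_zero] at h1
  -- bound on right SSE
  have hSR : SSE (regData n i z) RR ≤ (n : ℝ) * (B.card : ℝ) - (n : ℝ) * ∑ k ∈ B, z k := by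
    have h1 := SSE_le_c_sub_s (regData n i z) RR hbin
    rw [regData_card_s14, regData_s, if_neg hnotR, if_pos hR, ← hB] at h1
    linarith
  -- sum bounds
  have hAz : ∑ k ∈ A, z k ≤ (A.card : ℝ) := by
    have := Finset.sum_le_card_nsmul A z 1 (fun k _ => by rcases hz k with h | h <;> simp [h])
    simpa using this
  have hBz : (0 : ℝ) ≤ ∑ k ∈ B, z k :=
    Finset.sum_nonneg fun k _ => by rcases hz k with h | h <;> simp [h]
  have hdisj : Disjoint A B := by
    rw [Finset.disjoint_left]
    intro k hkA hkB
    simp only [hA, hB, hRL, hRR, Finset.mem_filter, Finset.mem_Icc] at hkA hkB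
    omega
  have hABcard : (A.card : ℝ) + (B.card : ℝ) ≤ (n : ℝ) := by
    have h1 : A.card + B.card = (A ∪ B).card := (Finset.card_union_of_disjoint hdisj).symm
    have h2 : (A ∪ B).card ≤ (Finset.Icc 1 n).card :=
      Finset.card_le_card (Finset.union_subset (Finset.filter_subset _ _)
        (Finset.filter_subset _ _))
    have h3 : (Finset.Icc 1 n).card = n := by simp
    have : A.card + B.card ≤ n := by omega
    exact_mod_cast this
  have hn1 : (1 : ℝ) ≤ (n : ℝ) := by exact_mod_cast hn
  have hsum : SSE (regData n i z) RL + SSE (regData n i z) RR ≤ (n : ℝ) ^ 2 := by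
    nlinarith
  rw [L, regData_total_card]
  have h201 : (0 : ℝ) < 201 * (n : ℝ) ^ 2 := by positivity
  rw [div_mul_eq_mul_div, div_le_div_iff₀ h201 (by norm_num : (0 : ℝ) < 201)]
  nlinarith

lemma SSE_big (n i : ℕ) (z : ℕ → ℝ) (hn : 1 ≤ n) (hz : ∀ k, z k = 0 ∨ z k = 1)
    (R : Finset ℕ) (h1 : 2 * i - 1 ∈ R) (h2 : 2 * i + 1 ∈ R) :
    (100 * (n : ℝ) ^ 2) ^ 2 / (201 * (n : ℝ) ^ 2) ≤ SSE (regData n i z) R := by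
  have hbin := regData_binary n i z hz
  set C := (Finset.Icc 1 n).filter (fun k => 2 * k ∈ R) with hC
  have hn1 : (1 : ℝ) ≤ (n : ℝ) := by exact_mod_cast hn
  have hCz0 : (0 : ℝ) ≤ ∑ k ∈ C, z k :=
    Finset.sum_nonneg fun k _ => by rcases hz k with h | h <;> simp [h]
  have hCz1 : ∑ k ∈ C, z k ≤ (C.card : ℝ) := by
    have := Finset.sum_le_card_nsmul C z 1 (fun k _ => by rcases hz k with h | h <;> simp [h])
    simpa using this
  apply SSE_ge (regData n i z) R hbin (100 * (n : ℝ) ^ 2) (201 * (n : ℝ) ^ 2)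
    (by positivity)
  · rw [regData_s, if_pos h2, ← hC]
    have : (0 : ℝ) ≤ (n : ℝ) * ∑ k ∈ C, z k := by positivity
    linarith
  · rw [regData_card_s14, regData_s, if_pos h1, if_pos h2, ← hC]
    nlinarith
  · rw [← regData_total_card n i z]
    exact_mod_cast Multiset.card_le_card (Multiset.filter_le _ _)

lemma L_far_ge (n i : ℕ) (z : ℕ → ℝ) (hn : 1 ≤ n) (hz : ∀ k, z k = 0 ∨ z k = 1) (j : ℕ)
    (h : (2 * i - 1 ∈ Finset.Icc 1 j ∧ 2 * i + 1 ∈ Finset.Icc 1 j) ∨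
      (2 * i - 1 ∈ Finset.Icc (j + 1) (2 * n + 1)
        ∧ 2 * i + 1 ∈ Finset.Icc (j + 1) (2 * n + 1))) :
    1 / 201 ≤ L (2 * n + 1) (regData n i z) j := by
  have hbin := regData_binary n i z hz
  have hn2 : (0 : ℝ) < (n : ℝ) ^ 2 := by
    have : (1 : ℝ) ≤ (n : ℝ) := by exact_mod_cast hn
    positivity
  have key : (1 : ℝ) / 201 ≤ 1 / (201 * (n : ℝ) ^ 2) *
      ((100 * (n : ℝ) ^ 2) ^ 2 / (201 * (n : ℝ) ^ 2)) := by
    have heq : 1 / (201 * (n : ℝ) ^ 2) * ((100 * (n : ℝ) ^ 2) ^ 2 / (201 * (n : ℝ) ^ 2))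
        = 10000 / 40401 := by
      field_simp
      ring
    rw [heq]; norm_num
  rw [L, regData_total_card]
  have h1m : (0 : ℝ) ≤ 1 / (201 * (n : ℝ) ^ 2) := by positivity
  rcases h with ⟨ha, hb⟩ | ⟨ha, hb⟩
  · have hgb := SSE_big n i z hn hz _ ha hb
    have hge0 := SSE_nonneg (regData n i z) (Finset.Icc (j + 1) (2 * n + 1)) hbin
    calc (1 : ℝ) / 201 ≤ _ := key
      _ ≤ _ := by apply mul_le_mul_of_nonneg_left _ h1m; linarith
  · have hgb := SSE_big n i z hn hz _ ha hb
    have hge0 := SSE_nonneg (regData n i z) (Finset.Icc 1 j) hbin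
    calc (1 : ℝ) / 201 ≤ _ := key
      _ ≤ _ := by apply mul_le_mul_of_nonneg_left _ h1m; linarith

/-- In the regression lower-bound construction, each of the two splits `2i−1` and `2i` has
mean squared loss at most `1/201`; consequently the optimum over all splits `0 ≤ j ≤ N` is
attained at one of them. -/
theorem reg_near_splits_loss (n : ℕ) (hn : 1 ≤ n) (i : ℕ) (hi : i ∈ Finset.Icc 1 n)
    (z : ℕ → ℝ) (hz : ∀ k, z k = 0 ∨ z k = 1) :
    (L (2 * n + 1) (regData n i z) (2 * i - 1) ≤ 1 / 201 ∧
     L (2 * n + 1) (regData n i z) (2 * i) ≤ 1 / 201) ∧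
    (Finset.Icc 0 (2 * n + 1)).inf' (Finset.nonempty_Icc.mpr (Nat.zero_le _))
        (L (2 * n + 1) (regData n i z))
      = min (L (2 * n + 1) (regData n i z) (2 * i - 1))
          (L (2 * n + 1) (regData n i z) (2 * i)) := by
  rw [Finset.mem_Icc] at hi
  obtain ⟨hi1, hi2⟩ := hi
  have h1 : L (2 * n + 1) (regData n i z) (2 * i - 1) ≤ 1 / 201 :=
    L_near_le n i z hn hi1 hi2 hz _ (by rw [Finset.mem_Icc]; omega)
      (by rw [Finset.mem_Icc]; omega)
  have h2 : L (2 * n + 1) (regData n i z) (2 * i) ≤ 1 / 201 :=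
    L_near_le n i z hn hi1 hi2 hz _ (by rw [Finset.mem_Icc]; omega)
      (by rw [Finset.mem_Icc]; omega)
  refine ⟨⟨h1, h2⟩, le_antisymm ?_ ?_⟩
  · exact le_min (Finset.inf'_le _ (by rw [Finset.mem_Icc]; omega))
      (Finset.inf'_le _ (by rw [Finset.mem_Icc]; omega))
  · apply Finset.le_inf'
    intro j hj
    rcases (by omega : j = 2 * i - 1 ∨ j = 2 * i ∨ j + 1 ≤ 2 * i - 1 ∨ 2 * i + 1 ≤ j) with
      rfl | rfl | hc | hc
    · exact min_le_left _ _
    · exact min_le_right _ _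
    · refine le_trans (le_trans (min_le_left _ _) h1) ?_
      exact L_far_ge n i z hn hz j (Or.inr ⟨by rw [Finset.mem_Icc]; omega,
        by rw [Finset.mem_Icc]; omega⟩)
    · refine le_trans (le_trans (min_le_left _ _) h1) ?_
      exact L_far_ge n i z hn hz j (Or.inl ⟨by rw [Finset.mem_Icc]; omega,
        by rw [Finset.mem_Icc]; omega⟩)
end
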